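/- Let X and Y be finite-dimensional real inner product spaces and let α, β : X → Y be linear maps with β(ker α) ∩ im α = {0} in Y. For ε ∈ ℝ let P(ε) : Y → Y denote the orthogonal projection of Y onto the subspace im(α + εβ), and let P∞ : Y → Y denote the orthogonal projection onto the subspace im α + β(ker α). Then P(ε) converges to P∞ (in operator norm) as ε tends to 0 through nonzero values. (This is part (1) of the Approximation Lemma: lim_{ε→0} im(α + εβ) = ⟨α(X), β(ker α)⟩.) -/

import Mathlib

open Filter Topology ContinuousLinearMap RealInnerProductSpace

section helpers
variable {E F : Type*} [NormedAddCommGroup E] [InnerProductSpace ℝ E]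
    [FiniteDimensional ℝ E] [NormedAddCommGroup F] [InnerProductSpace ℝ F]
    [FiniteDimensional ℝ F]

lemma isUnit_adjoint_comp (T : E →L[ℝ] F) (hT : Function.Injective T) :
    IsUnit ((ContinuousLinearMap.adjoint T).comp T) := by
  set S := (ContinuousLinearMap.adjoint T).comp T with hS
  have hker : LinearMap.ker (S : E →ₗ[ℝ] E) = ⊥ := by
    rw [LinearMap.ker_eq_bot']
    intro x hx
    have h1 : ⟪S x, x⟫ = 0 := by
      have : S x = 0 := hx
      rw [this, inner_zero_left]
    have h2 : ⟪T x, T x⟫ = 0 := by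
      rw [hS] at h1
      rwa [coe_comp', Function.comp_apply, ContinuousLinearMap.adjoint_inner_left] at h1
    exact hT (by rw [inner_self_eq_zero.mp h2, map_zero])
  have hbij : Function.Bijective (S : E →ₗ[ℝ] E) :=
    ⟨LinearMap.ker_eq_bot.mp hker,
      (LinearMap.injective_iff_surjective).mp (LinearMap.ker_eq_bot.mp hker)⟩
  let e := LinearEquiv.ofBijective (S : E →ₗ[ℝ] E) hbij
  let e' := e.toContinuousLinearEquiv
  refine ⟨(ContinuousLinearEquiv.unitsEquiv ℝ E).symm e', ?_⟩
  ext x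
  rfl

lemma proj_formula (T : E →L[ℝ] F)
    (hT : IsUnit ((ContinuousLinearMap.adjoint T).comp T)) :
    (LinearMap.range (T : E →ₗ[ℝ] F)).subtypeL.comp (Submodule.orthogonalProjection (LinearMap.range (T : E →ₗ[ℝ] F))) =
      T.comp ((Ring.inverse ((ContinuousLinearMap.adjoint T).comp T)).comp
        (ContinuousLinearMap.adjoint T)) := by
  ext y
  simp only [coe_comp', Function.comp_apply, Submodule.coe_subtypeL', Submodule.coe_subtype]
  rw [← Submodule.starProjection_apply]
  apply Submodule.eq_starProjection_of_mem_of_inner_eq_zero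
  · exact LinearMap.mem_range_self _ _
  · rintro w ⟨c, rfl⟩
    rw [inner_sub_left]
    simp only [ContinuousLinearMap.coe_coe, ← ContinuousLinearMap.adjoint_inner_left T]
    have : (ContinuousLinearMap.adjoint T)
        (T ((Ring.inverse ((ContinuousLinearMap.adjoint T).comp T))
          ((ContinuousLinearMap.adjoint T) y)))
        = (ContinuousLinearMap.adjoint T) y := by
      have h2 := Ring.mul_inverse_cancel _ hT
      calc _ = (((ContinuousLinearMap.adjoint T).comp T) *
            Ring.inverse ((ContinuousLinearMap.adjoint T).comp T))
            ((ContinuousLinearMap.adjoint T) y) := rfl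
        _ = _ := by rw [h2]; rfl
    rw [this, sub_self]

lemma ContinuousAt.clm_comp' {Z E F G : Type*} [TopologicalSpace Z]
    [NormedAddCommGroup E] [NormedSpace ℝ E] [NormedAddCommGroup F] [NormedSpace ℝ F]
    [NormedAddCommGroup G] [NormedSpace ℝ G]
    {g : Z → F →L[ℝ] G} {f : Z → E →L[ℝ] F} {x : Z}
    (hg : ContinuousAt g x) (hf : ContinuousAt f x) :
    ContinuousAt (fun z => (g z).comp (f z)) x :=
  (((ContinuousLinearMap.compL ℝ E F G).continuous₂.continuousAt).comp (hg.prodMk hf) :)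

lemma proj_congr {F : Type*} [NormedAddCommGroup F] [InnerProductSpace ℝ F]
    [FiniteDimensional ℝ F] {S₁ S₂ : Submodule ℝ F} (h : S₁ = S₂) :
    S₁.subtypeL.comp (Submodule.orthogonalProjection S₁) = S₂.subtypeL.comp (Submodule.orthogonalProjection S₂) := by
  subst h; rfl

end helpers

set_option maxHeartbeats 1000000 in
theorem approximation_lemma_image
    (X Y : Type*) [NormedAddCommGroup X] [InnerProductSpace ℝ X]
    [FiniteDimensional ℝ X]
    [NormedAddCommGroup Y] [InnerProductSpace ℝ Y] [FiniteDimensional ℝ Y]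
    (α β : X →ₗ[ℝ] Y)
    (h : (LinearMap.ker α).map β ⊓ LinearMap.range α = ⊥) :
    Tendsto
      (fun ε : ℝ =>
        (LinearMap.range (α + ε • β)).subtypeL.comp
          (Submodule.orthogonalProjection (LinearMap.range (α + ε • β))))
      (𝓝[≠] (0 : ℝ))
      (𝓝 ((LinearMap.range α ⊔ (LinearMap.ker α).map β).subtypeL.comp
          (Submodule.orthogonalProjection
            (LinearMap.range α ⊔ (LinearMap.ker α).map β)))) := by
  classical
  set K := LinearMap.ker α with hK
  set W := K.map β with hW
  let Kc := Kᗮ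
  let b1 := Module.finBasis ℝ ↥Kc
  let b2 := Module.finBasis ℝ ↥W
  set ι := Fin (Module.finrank ℝ ↥Kc) ⊕ Fin (Module.finrank ℝ ↥W) with hι
  let vA : ι → Y := Sum.elim (fun i => α (b1 i)) (fun j => (b2 j : Y))
  let vB : ι → Y := Sum.elim (fun i => β (b1 i)) (fun _ => 0)
  let bE : Module.Basis ι ℝ (EuclideanSpace ℝ ι) := EuclideanSpace.basisFun ι ℝ |>.toBasis
  let Φ : (ι → Y) →ₗ[ℝ] (EuclideanSpace ℝ ι →L[ℝ] Y) :=
    (LinearMap.toContinuousLinearMap : (EuclideanSpace ℝ ι →ₗ[ℝ] Y) ≃ₗ[ℝ] _).toLinearMap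
      ∘ₗ ((bE.constr ℝ : (ι → Y) ≃ₗ[ℝ] (EuclideanSpace ℝ ι →ₗ[ℝ] Y))).toLinearMap
  set T : ℝ → (EuclideanSpace ℝ ι →L[ℝ] Y) := fun ε => Φ (vA + ε • vB) with hT
  -- range of T ε
  have hrange : ∀ ε : ℝ, LinearMap.range (T ε : EuclideanSpace ℝ ι →ₗ[ℝ] Y) =
      Submodule.span ℝ (Set.range (vA + ε • vB)) := by
    intro ε
    have : LinearMap.range (T ε : EuclideanSpace ℝ ι →ₗ[ℝ] Y) = LinearMap.range (bE.constr ℝ (vA + ε • vB)) := rfl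
    rw [this, Module.Basis.constr_range]
  -- span description
  have hspan : ∀ ε : ℝ, Submodule.span ℝ (Set.range (vA + ε • vB)) =
      Submodule.map (α + ε • β) Kc ⊔ W := by
    intro ε
    have helim : vA + ε • vB =
        Sum.elim (fun i => (α + ε • β) (b1 i : X)) (fun j => (b2 j : Y)) := by
      funext k
      cases k with
      | inl i => simp [vA, vB, LinearMap.add_apply, LinearMap.smul_apply]
      | inr j => simp [vA, vB]
    rw [helim, Set.Sum.elim_range, Submodule.span_union]
    congr 1
    · -- span of images = map (α + ε β) Kc
      have h1 : (fun i => (α + ε • β) (b1 i : X)) = (α + ε • β) ∘ (Kc.subtype ∘ b1) := rfl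
      rw [h1, Set.range_comp, ← Submodule.map_span, Set.range_comp, ← Submodule.map_span,
        b1.span_eq, Submodule.map_top, Submodule.range_subtype]
    · have h1 : (fun j => (b2 j : Y)) = W.subtype ∘ b2 := rfl
      rw [h1, Set.range_comp, ← Submodule.map_span, b2.span_eq, Submodule.map_top,
        Submodule.range_subtype]
  -- map α Kc = range α
  have hmapα : Submodule.map α Kc = LinearMap.range α := by
    have htop : K ⊔ Kc = ⊤ := Submodule.sup_orthogonal_of_hasOrthogonalProjection
    have hbot : Submodule.map α K = ⊥ := by
      rw [Submodule.eq_bot_iff]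
      rintro y ⟨x, hx, rfl⟩
      exact hx
    rw [LinearMap.range_eq_map, ← htop, Submodule.map_sup, hbot, bot_sup_eq]
  -- range of T ε for ε ≠ 0
  have hrange_ne : ∀ ε : ℝ, ε ≠ 0 →
      LinearMap.range (T ε : EuclideanSpace ℝ ι →ₗ[ℝ] Y) = LinearMap.range (α + ε • β) := by
    intro ε hε
    rw [hrange, hspan]
    apply le_antisymm
    · apply sup_le
      · rw [Submodule.map_le_iff_le_comap]
        intro x _
        exact LinearMap.mem_range_self _ _
      · rintro y ⟨k, hk, rfl⟩
        refine ⟨ε⁻¹ • k, ?_⟩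
        have hk0 : α k = 0 := hk
        simp [LinearMap.add_apply, LinearMap.smul_apply, map_smul, hk0,
          smul_smul, mul_inv_cancel₀ hε, inv_mul_cancel₀ hε]
    · rintro y ⟨x, rfl⟩
      have hx : x ∈ K ⊔ Kc := by
        rw [Submodule.sup_orthogonal_of_hasOrthogonalProjection]; trivial
      obtain ⟨k, hkK, p, hpKc, hkp⟩ := Submodule.mem_sup.mp hx
      have hαk : α k = 0 := hkK
      have hdecomp : (α + ε • β) x = (α + ε • β) p + ε • β k := by
        rw [← hkp]
        simp only [LinearMap.add_apply, LinearMap.smul_apply, map_add, hαk, smul_add]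
        abel
      rw [hdecomp]
      exact Submodule.add_mem _
        (Submodule.mem_sup_left (Submodule.mem_map_of_mem hpKc))
        (Submodule.mem_sup_right (Submodule.smul_mem _ _ (Submodule.mem_map_of_mem hkK)))
  -- range of T 0
  have hrange0 : LinearMap.range (T 0 : EuclideanSpace ℝ ι →ₗ[ℝ] Y) = LinearMap.range α ⊔ W := by
    have h00 : α + (0 : ℝ) • β = α := by rw [zero_smul, add_zero]
    rw [hrange, hspan, h00, hmapα]
  -- linear independence
  have li1 : LinearIndependent ℝ fun i => α ((b1 i : X)) := by
    have h1 : (fun i => α ((b1 i : X))) = (α ∘ₗ Kc.subtype) ∘ b1 := rfl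
    rw [h1]
    apply b1.linearIndependent.map'
    rw [LinearMap.ker_eq_bot']
    intro x hx
    have hx' : (x : X) ∈ K := hx
    have hx0 : (x : X) ∈ (⊥ : Submodule ℝ X) :=
      (Submodule.orthogonal_disjoint K).le_bot ⟨hx', x.2⟩
    exact Subtype.ext hx0
  have li2 : LinearIndependent ℝ fun j => ((b2 j : Y)) := by
    have h1 : (fun j => ((b2 j : Y))) = W.subtype ∘ b2 := rfl
    rw [h1]
    exact b2.linearIndependent.map' _ (Submodule.ker_subtype W)
  have hsp1 : Submodule.span ℝ (Set.range fun i => α ((b1 i : X))) = LinearMap.range α := by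
    have h1 : (fun i => α ((b1 i : X))) = α ∘ (Kc.subtype ∘ b1) := rfl
    rw [h1, Set.range_comp, ← Submodule.map_span, Set.range_comp, ← Submodule.map_span,
      b1.span_eq, Submodule.map_top, Submodule.range_subtype, hmapα]
  have hsp2 : Submodule.span ℝ (Set.range fun j => ((b2 j : Y))) = W := by
    have h1 : (fun j => ((b2 j : Y))) = W.subtype ∘ b2 := rfl
    rw [h1, Set.range_comp, ← Submodule.map_span, b2.span_eq, Submodule.map_top,
      Submodule.range_subtype]
  have liA : LinearIndependent ℝ vA := by
    apply li1.sum_type li2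
    rw [hsp1, hsp2]
    exact disjoint_iff.mpr (by rwa [inf_comm] at h)
  -- T 0 is injective
  have happ : ∀ c : EuclideanSpace ℝ ι, T 0 c = ∑ i, c i • vA i := by
    intro c
    have h0 : T 0 c = (bE.constr ℝ (vA + (0:ℝ) • vB)) c := rfl
    rw [h0]
    have h1 : vA + (0:ℝ) • vB = vA := by rw [zero_smul, add_zero]
    rw [h1, Module.Basis.constr_apply_fintype]
    congr 1
  have hT0inj : Function.Injective (T 0) := by
    have hker : LinearMap.ker (T 0 : EuclideanSpace ℝ ι →ₗ[ℝ] Y) = ⊥ := by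
      rw [LinearMap.ker_eq_bot']
      intro c hc
      have hsum : ∑ i, c i • vA i = 0 := by rw [← happ c]; exact hc
      have hz := Fintype.linearIndependent_iff.mp liA c hsum
      ext i
      exact hz i
    exact LinearMap.ker_eq_bot.mp hker
  -- units and continuity
  have hU0 : IsUnit ((ContinuousLinearMap.adjoint (T 0)).comp (T 0)) :=
    isUnit_adjoint_comp _ hT0inj
  set G : ℝ → (EuclideanSpace ℝ ι →L[ℝ] EuclideanSpace ℝ ι) :=
    fun ε => (ContinuousLinearMap.adjoint (T ε)).comp (T ε) with hG
  have hTcont : Continuous T := by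
    have h1 : Continuous fun ε : ℝ => vA + ε • vB :=
      continuous_const.add (continuous_id.smul continuous_const)
    exact (Φ.continuous_of_finiteDimensional).comp h1
  have hadjcont : Continuous fun ε => ContinuousLinearMap.adjoint (T ε) :=
    (ContinuousLinearMap.adjoint (𝕜 := ℝ) (E := EuclideanSpace ℝ ι)
      (F := Y)).continuous.comp hTcont
  have hGcont : Continuous G := hadjcont.clm_comp hTcont
  have hUev : ∀ᶠ ε in 𝓝 (0 : ℝ), IsUnit (G ε) :=
    hGcont.continuousAt.preimage_mem_nhds (Units.isOpen.mem_nhds hU0)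
  set Fn : ℝ → (Y →L[ℝ] Y) := fun ε =>
    (T ε).comp ((Ring.inverse (G ε)).comp (ContinuousLinearMap.adjoint (T ε))) with hFn
  have hFcont : ContinuousAt Fn 0 := by
    have hinv : ContinuousAt (fun ε => Ring.inverse (G ε)) 0 := by
      have h1 : ContinuousAt Ring.inverse (G 0) := by
        have h2 := NormedRing.inverse_continuousAt hU0.unit
        rwa [IsUnit.unit_spec] at h2
      exact h1.comp hGcont.continuousAt
    exact hTcont.continuousAt.clm_comp' (hinv.clm_comp' hadjcont.continuousAt)
  -- assembly
  have key0 : Fn 0 = (LinearMap.range α ⊔ W).subtypeL.comp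
      (Submodule.orthogonalProjection (LinearMap.range α ⊔ W)) :=
    (proj_formula (T 0) hU0).symm.trans (proj_congr hrange0)
  have hlim : Tendsto Fn (𝓝[≠] (0 : ℝ)) (𝓝 (Fn 0)) :=
    hFcont.tendsto.mono_left nhdsWithin_le_nhds
  rw [← key0]
  apply hlim.congr'
  filter_upwards [hUev.filter_mono nhdsWithin_le_nhds, self_mem_nhdsWithin] with ε hu hεne
  have hεne' : ε ≠ 0 := hεne
  exact (proj_formula (T ε) hu).symm.trans (proj_congr (hrange_ne ε hεne'))
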